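/- If G is the unweighted complete graph on n nodes with incidence matrix B, then the cutset projection is 𝒫 = (1/n) Bᵀ B, and its ∞-norm is ‖𝒫‖_∞ = 2(n−1)/n. -/

import Mathlib

set_option maxHeartbeats 1000000


open Matrix

/-- The edges of the complete graph on `Fin n`: ordered pairs `(i,j)` with `i < j`. -/
abbrev CompleteEdge (n : ℕ) := {p : Fin n × Fin n // p.1 < p.2}

/-- Oriented incidence matrix of the unweighted complete graph on `n` nodes. -/
def completeIncidence (n : ℕ) : Matrix (Fin n) (CompleteEdge n) ℝ :=
  fun i e => if i = e.1.1 then 1 else if i = e.1.2 then -1 else 0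

lemma ci_apply {n : ℕ} (i : Fin n) (e : CompleteEdge n) :
    completeIncidence n i e
      = (if i = e.1.1 then (1:ℝ) else 0) + (if i = e.1.2 then (-1:ℝ) else 0) := by
  have hne : e.1.1 ≠ e.1.2 := ne_of_lt e.2
  simp only [completeIncidence]
  by_cases h1 : i = e.1.1 <;> by_cases h2 : i = e.1.2 <;> simp_all

lemma ci_colsum {n : ℕ} (e : CompleteEdge n) :
    ∑ i, completeIncidence n i e = 0 := by
  simp [ci_apply, Finset.sum_add_distrib]

lemma sum_edge {n : ℕ} (g : Fin n × Fin n → ℝ) :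
    ∑ e : CompleteEdge n, g e.1
      = ∑ p ∈ Finset.univ.filter (fun p : Fin n × Fin n => p.1 < p.2), g p :=
  (Finset.sum_subtype _ (by simp) g).symm

lemma trichotomy_sum {n : ℕ} (i : Fin n) :
    (∑ b : Fin n, if i < b then (1:ℝ) else 0)
      + (∑ b : Fin n, if b < i then (1:ℝ) else 0) = (n:ℝ) - 1 := by
  rw [← Finset.sum_add_distrib]
  have h : ∀ b : Fin n, ((if i < b then (1:ℝ) else 0) + (if b < i then (1:ℝ) else 0))
      = 1 - (if i = b then 1 else 0) := by
    intro b
    rcases lt_trichotomy i b with h | h | h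
    · simp [h, asymm h, ne_of_lt h]
    · simp [h, lt_irrefl]
    · simp [h, asymm h, (ne_of_lt h).symm]
  rw [Finset.sum_congr rfl fun b _ => h b]
  simp [Finset.sum_sub_distrib, Finset.card_univ]

def Bterm (n : ℕ) (i j : Fin n) (p : Fin n × Fin n) : ℝ :=
    (if i = p.1 then (1:ℝ) else 0) * (if j = p.1 then 1 else 0)
  - (if i = p.1 then (1:ℝ) else 0) * (if j = p.2 then 1 else 0)
  - (if i = p.2 then (1:ℝ) else 0) * (if j = p.1 then 1 else 0)
  + (if i = p.2 then (1:ℝ) else 0) * (if j = p.2 then 1 else 0)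

lemma BBt_apply {n : ℕ} (i j : Fin n) :
    (completeIncidence n * (completeIncidence n)ᵀ) i j
      = if i = j then (n:ℝ) - 1 else -1 := by
  rw [Matrix.mul_apply]
  have hpt : ∀ e : CompleteEdge n,
      completeIncidence n i e * (completeIncidence n)ᵀ e j = Bterm n i j e.1 := by
    intro e
    have hne : e.1.1 ≠ e.1.2 := ne_of_lt e.2
    simp only [transpose_apply, ci_apply, Bterm]
    by_cases h1 : i = e.1.1 <;> by_cases h2 : i = e.1.2 <;>
      by_cases h3 : j = e.1.1 <;> by_cases h4 : j = e.1.2 <;>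
      simp_all <;> ring
  have key : (∑ e : CompleteEdge n, completeIncidence n i e * (completeIncidence n)ᵀ e j)
      = ∑ p ∈ Finset.univ.filter (fun p : Fin n × Fin n => p.1 < p.2), Bterm n i j p :=
    (Finset.sum_congr rfl fun e _ => hpt e).trans (sum_edge _)
  rw [key, Finset.sum_filter]
  by_cases hij : i = j
  · subst hij
    have hpt2 : ∀ p : Fin n × Fin n,
        (if p.1 < p.2 then Bterm n i i p else 0)
        = (if i = p.1 then (if p.1 < p.2 then (1:ℝ) else 0) else 0)
          + (if i = p.2 then (if p.1 < p.2 then (1:ℝ) else 0) else 0) := by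
      intro p
      simp only [Bterm]
      by_cases h1 : i = p.1 <;> by_cases h2 : i = p.2 <;>
        by_cases h3 : p.1 < p.2 <;> simp_all
    rw [Finset.sum_congr rfl fun p _ => hpt2 p, Finset.sum_add_distrib,
      Fintype.sum_prod_type_right, Fintype.sum_prod_type]
    simp only [Finset.sum_ite_eq, Finset.mem_univ, if_true]
    rw [trichotomy_sum i]
  · have hpt2 : ∀ p : Fin n × Fin n,
        (if p.1 < p.2 then Bterm n i j p else 0)
        = -(if j = p.2 then (if i = p.1 then (if p.1 < p.2 then (1:ℝ) else 0) else 0) else 0)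
          - (if i = p.2 then (if j = p.1 then (if p.1 < p.2 then (1:ℝ) else 0) else 0) else 0) := by
      intro p
      simp only [Bterm]
      by_cases h5 : p.1 < p.2
      · have hne : p.1 ≠ p.2 := ne_of_lt h5
        simp only [if_pos h5]
        by_cases h1 : i = p.1 <;> by_cases h2 : i = p.2 <;>
          by_cases h3 : j = p.1 <;> by_cases h4 : j = p.2 <;> simp_all
      · simp [if_neg h5]
    rw [Finset.sum_congr rfl fun p _ => hpt2 p, Finset.sum_sub_distrib]
    rw [Fintype.sum_prod_type, Fintype.sum_prod_type]
    simp only [Finset.sum_neg_distrib, Finset.sum_ite_eq, Finset.mem_univ, if_true]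
    rcases lt_or_gt_of_ne hij with h | h
    · simp [h, asymm h, hij]
    · simp [h, asymm h, hij]

lemma BtB_apply {n : ℕ} (e f : CompleteEdge n) :
    ((completeIncidence n)ᵀ * completeIncidence n) e f
      = (if e.1.1 = f.1.1 then (1:ℝ) else 0) - (if e.1.1 = f.1.2 then 1 else 0)
        - (if e.1.2 = f.1.1 then 1 else 0) + (if e.1.2 = f.1.2 then 1 else 0) := by
  rw [Matrix.mul_apply]
  have h : ∀ i : Fin n, (completeIncidence n)ᵀ e i * completeIncidence n i f
      = (if i = e.1.1 then (if i = f.1.1 then (1:ℝ) else 0) else 0)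
      - (if i = e.1.1 then (if i = f.1.2 then (1:ℝ) else 0) else 0)
      - (if i = e.1.2 then (if i = f.1.1 then (1:ℝ) else 0) else 0)
      + (if i = e.1.2 then (if i = f.1.2 then (1:ℝ) else 0) else 0) := by
    intro i
    have he : e.1.1 ≠ e.1.2 := ne_of_lt e.2
    have hf : f.1.1 ≠ f.1.2 := ne_of_lt f.2
    simp only [transpose_apply, ci_apply]
    by_cases h1 : i = e.1.1 <;> by_cases h2 : i = e.1.2 <;>
      by_cases h3 : i = f.1.1 <;> by_cases h4 : i = f.1.2 <;>
      simp [h1, h2, h3, h4, he, he.symm, hf, hf.symm] <;> split_ifs <;> ring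
  rw [Finset.sum_congr rfl fun i _ => h i, Finset.sum_add_distrib,
    Finset.sum_sub_distrib, Finset.sum_sub_distrib]
  simp [Finset.sum_ite_eq']

lemma BtB_diag {n : ℕ} (e : CompleteEdge n) :
    ((completeIncidence n)ᵀ * completeIncidence n) e e = 2 := by
  have hne : e.1.1 ≠ e.1.2 := ne_of_lt e.2
  rw [BtB_apply]
  simp [hne, hne.symm]
  norm_num

lemma BtB_off {n : ℕ} (e f : CompleteEdge n) (h : e ≠ f) :
    ((completeIncidence n)ᵀ * completeIncidence n) e f = 1
    ∨ ((completeIncidence n)ᵀ * completeIncidence n) e f = 0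
    ∨ ((completeIncidence n)ᵀ * completeIncidence n) e f = -1 := by
  have hab : e.1.1 < e.1.2 := e.2
  have hcd : f.1.1 < f.1.2 := f.2
  rw [BtB_apply]
  by_cases h1 : e.1.1 = f.1.1 <;> by_cases h2 : e.1.1 = f.1.2 <;>
    by_cases h3 : e.1.2 = f.1.1 <;> by_cases h4 : e.1.2 = f.1.2 <;>
    simp [h1, h2, h3, h4, ne_of_lt hab, (ne_of_lt hab).symm,
      ne_of_lt hcd, (ne_of_lt hcd).symm] <;>
    first
      | exact absurd (h1.symm.trans h2) (ne_of_lt hcd)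
      | exact absurd (h3.symm.trans h4) (ne_of_lt hcd)
      | exact absurd (h1.trans h3.symm) (ne_of_lt hab)
      | exact absurd (h2.trans h4.symm) (ne_of_lt hab)
      | exact absurd (Subtype.ext (Prod.ext h1 h4)) h
      | exact absurd (h2 ▸ ((hab.trans_eq h3).trans hcd)) (lt_irrefl _)
      | norm_num


/-- For the unweighted complete graph on `n ≥ 2` nodes with incidence
matrix `B`, Laplacian `L = BBᵀ` and Moore–Penrose pseudoinverse `L†`, the cutset projection
`𝒫 = Bᵀ L† B` equals `(1/n) Bᵀ B`, and its induced ∞-norm (the maximum absolute row sum)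
equals `2(n−1)/n`. -/
theorem cutset_projection_complete_graph
    (n : ℕ) (hn : 2 ≤ n)
    (B : Matrix (Fin n) (CompleteEdge n) ℝ) (hB : B = completeIncidence n)
    (L Ldag : Matrix (Fin n) (Fin n) ℝ)
    (hL : L = B * Bᵀ)
    (hmp1 : L * Ldag * L = L) (hmp2 : Ldag * L * Ldag = Ldag)
    (hmp3 : (L * Ldag)ᵀ = L * Ldag) (hmp4 : (Ldag * L)ᵀ = Ldag * L)
    (P : Matrix (CompleteEdge n) (CompleteEdge n) ℝ)
    (hP : P = Bᵀ * Ldag * B) :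
    P = (n : ℝ)⁻¹ • (Bᵀ * B) ∧
    (∀ e : CompleteEdge n, ∑ f : CompleteEdge n, |P e f| ≤ 2 * (n - 1) / n) ∧
    (∃ e : CompleteEdge n, ∑ f : CompleteEdge n, |P e f| = 2 * (n - 1) / n) := by
  subst hB hL hP
  set B := completeIncidence n with hBdef
  have hnn : (n : ℝ) ≠ 0 := Nat.cast_ne_zero.mpr (by omega)
  have hLmat : B * Bᵀ = (n:ℝ) • (1 : Matrix (Fin n) (Fin n) ℝ)
      - Matrix.of (fun _ _ => (1:ℝ)) := by
    ext i j
    rw [BBt_apply]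
    by_cases h : i = j <;>
      simp [Matrix.sub_apply, Matrix.smul_apply, Matrix.one_apply, h]
  have hJB : (Matrix.of (fun _ _ => (1:ℝ)) : Matrix (Fin n) (Fin n) ℝ) * B = 0 := by
    ext k e
    simpa [Matrix.mul_apply] using ci_colsum e
  have hLB : (B * Bᵀ) * B = (n:ℝ) • B := by
    rw [hLmat, Matrix.sub_mul, Matrix.smul_mul, Matrix.one_mul, hJB, sub_zero]
  have hBtL : Bᵀ * (B * Bᵀ) = (n:ℝ) • Bᵀ := by
    have h := congrArg Matrix.transpose hLB
    simpa [Matrix.transpose_mul, Matrix.mul_assoc] using h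
  have key : ((n:ℝ) * (n:ℝ)) • (Bᵀ * Ldag * B) = (n:ℝ) • (Bᵀ * B) := by
    have h5 : ((n:ℝ) • Bᵀ) * Ldag * ((n:ℝ) • B) = ((n:ℝ) * (n:ℝ)) • (Bᵀ * Ldag * B) := by
      rw [Matrix.smul_mul, Matrix.smul_mul, Matrix.mul_smul, smul_smul]
    rw [← h5, ← hBtL, ← hLB]
    calc (Bᵀ * (B * Bᵀ)) * Ldag * ((B * Bᵀ) * B)
        = Bᵀ * ((B * Bᵀ) * Ldag * (B * Bᵀ)) * B := by
          simp only [Matrix.mul_assoc]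
      _ = Bᵀ * (B * Bᵀ) * B := by rw [hmp1]
      _ = Bᵀ * ((n:ℝ) • B) := by rw [Matrix.mul_assoc, hLB]
      _ = (n:ℝ) • (Bᵀ * B) := by rw [Matrix.mul_smul]
  have hProj : Bᵀ * Ldag * B = (n:ℝ)⁻¹ • (Bᵀ * B) := by
    have h2 := congrArg (fun Y : Matrix (CompleteEdge n) (CompleteEdge n) ℝ =>
      ((n:ℝ) * (n:ℝ))⁻¹ • Y) key
    simp only [smul_smul, inv_mul_cancel₀ (mul_ne_zero hnn hnn), one_smul] at h2
    rw [h2]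
    congr 1
    field_simp
  have hrow : ∀ e : CompleteEdge n,
      ∑ f : CompleteEdge n, |(Bᵀ * Ldag * B) e f| = 2 * ((n:ℝ) - 1) / n := by
    intro e
    rw [hProj]
    set M := Bᵀ * B with hM
    have hMsymm : Mᵀ = M := by rw [hM, Matrix.transpose_mul, Matrix.transpose_transpose]
    have hMM : M * M = (n:ℝ) • M := by
      calc M * M = Bᵀ * ((B * Bᵀ) * B) := by
            rw [hM, Matrix.mul_assoc, ← Matrix.mul_assoc B Bᵀ B]
        _ = (n:ℝ) • M := by rw [hLB, Matrix.mul_smul, hM]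
    have hsq : ∑ f : CompleteEdge n, M e f * M e f = (n:ℝ) * M e e := by
      have h1 : (M * M) e e = ∑ f, M e f * M f e := Matrix.mul_apply
      have h2 : ∀ f, M f e = M e f := by
        intro f
        conv_lhs => rw [← hMsymm]
        exact M.transpose_apply f e
      rw [hMM] at h1
      simp only [Matrix.smul_apply, smul_eq_mul] at h1
      rw [h1]
      exact Finset.sum_congr rfl fun f _ => by rw [h2 f]
    have hdiag : M e e = 2 := BtB_diag e
    have habs : ∀ f ∈ Finset.univ.erase e, |M e f| = M e f * M e f := by
      intro f hf
      have hfe : e ≠ f := (Finset.ne_of_mem_erase hf).symm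
      have h0 := BtB_off e f hfe
      rw [← hBdef] at h0
      rcases h0 with h | h | h <;> rw [hM, h] <;> norm_num
    have e1 : ∑ f : CompleteEdge n, |M e f|
        = |M e e| + ∑ f ∈ Finset.univ.erase e, |M e f| :=
      (Finset.add_sum_erase _ _ (Finset.mem_univ e)).symm
    have e2 : ∑ f : CompleteEdge n, M e f * M e f
        = M e e * M e e + ∑ f ∈ Finset.univ.erase e, M e f * M e f :=
      (Finset.add_sum_erase _ _ (Finset.mem_univ e)).symm
    have e3 : ∑ f ∈ Finset.univ.erase e, |M e f|
        = ∑ f ∈ Finset.univ.erase e, M e f * M e f :=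
      Finset.sum_congr rfl habs
    have e4 : ∑ f : CompleteEdge n, |M e f| = 2 * (n:ℝ) - 2 := by
      rw [e1, e3]
      have h6 : ∑ f ∈ Finset.univ.erase e, M e f * M e f
          = (n:ℝ) * M e e - M e e * M e e := by
        rw [← hsq, e2]; ring
      rw [h6, hdiag, abs_two]
      ring
    have e5 : ∀ f : CompleteEdge n, |((n:ℝ)⁻¹ • M) e f| = (n:ℝ)⁻¹ * |M e f| := by
      intro f
      rw [Matrix.smul_apply, smul_eq_mul, abs_mul, abs_inv, Nat.abs_cast]
    rw [Finset.sum_congr rfl fun f _ => e5 f, ← Finset.mul_sum, e4]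
    field_simp
  refine ⟨hProj, fun e => le_of_eq (hrow e), ?_⟩
  exact ⟨⟨(⟨0, by omega⟩, ⟨1, by omega⟩), by simp [Fin.lt_def]⟩, hrow _⟩
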